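/- Suppose v is a unitary with v_t = P_N^{it} P^{-it} where P_N^{it} and P^{it} are one-parameter unitary groups, and suppose G̃ is a unitary satisfying G̃ (P_N^{it} ⊗ P_N^{it}) = (P^{it} ⊗ P_N^{it}) G̃ and Ŵ (P^{it} ⊗ P^{it}) = (P^{it} ⊗ P^{it}) Ŵ with G̃ = Ŵ Ω* for a unitary Ω. Then Ω*(v_t ⊗ v_t) = Δ̂(v_t)(τ̂_t ⊗ τ̂_t)(Ω*), where Δ̂(m) = Ŵ*(1 ⊗ m)Ŵ and τ̂_t(m) = P^{it} m P^{-it}. -/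
import Mathlib


open TensorProduct

/-- Let `v_t = P_N^{it} P^{-it}`, with `G̃ = Ŵ Ω*` a unitary
satisfying `G̃ (P_N^{it} ⊗ P_N^{it}) = (P^{it} ⊗ P_N^{it}) G̃` and
`Ŵ (P^{it} ⊗ P^{it}) = (P^{it} ⊗ P^{it}) Ŵ`.  Then
`Ω*(v_t ⊗ v_t) = Δ̂(v_t)·(τ̂_t ⊗ τ̂_t)(Ω*)`, where `Δ̂(m) = Ŵ*(1 ⊗ m)Ŵ` and
`τ̂_t(m) = P^{it} m P^{-it}`. -/
theorem v_coboundary_identity {H : Type*} [AddCommGroup H] [Module ℂ H]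
    (P PN : ℝ → (H →ₗ[ℂ] H))
    (hPgrp : ∀ s t : ℝ, P (s + t) = P s ∘ₗ P t) (hP0 : P 0 = LinearMap.id)
    (hPNgrp : ∀ s t : ℝ, PN (s + t) = PN s ∘ₗ PN t) (hPN0 : PN 0 = LinearMap.id)
    (Ω Ωinv What Whatinv : H ⊗[ℂ] H →ₗ[ℂ] H ⊗[ℂ] H)
    (hΩ1 : Ω ∘ₗ Ωinv = LinearMap.id) (hΩ2 : Ωinv ∘ₗ Ω = LinearMap.id)
    (hW1 : What ∘ₗ Whatinv = LinearMap.id) (hW2 : Whatinv ∘ₗ What = LinearMap.id)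
    (hWP : ∀ t : ℝ,
      What ∘ₗ TensorProduct.map (P t) (P t) = TensorProduct.map (P t) (P t) ∘ₗ What)
    (v : ℝ → (H →ₗ[ℂ] H))
    (hv : ∀ t : ℝ, v t = PN t ∘ₗ P (-t))
    (Gtilde : H ⊗[ℂ] H →ₗ[ℂ] H ⊗[ℂ] H)
    (hGtilde : Gtilde = What ∘ₗ Ωinv)
    (hGP : ∀ t : ℝ,
      Gtilde ∘ₗ TensorProduct.map (PN t) (PN t)
        = TensorProduct.map (P t) (PN t) ∘ₗ Gtilde) :
    ∀ t : ℝ,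
      Ωinv ∘ₗ TensorProduct.map (v t) (v t)
        = (Whatinv ∘ₗ LinearMap.lTensor H (v t) ∘ₗ What) ∘ₗ
            (TensorProduct.map (P t) (P t) ∘ₗ Ωinv ∘ₗ
              TensorProduct.map (P (-t)) (P (-t))) := by
  intro t
  have hPid : P (-t) ∘ₗ P t = LinearMap.id := by
    rw [← hPgrp]; simpa using hP0
  have hvv : ∀ x, TensorProduct.map (v t) (v t) x
      = TensorProduct.map (PN t) (PN t) (TensorProduct.map (P (-t)) (P (-t)) x) := by
    intro x
    rw [← LinearMap.comp_apply, ← TensorProduct.map_comp, ← hv t]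
  have hlT : ∀ y, LinearMap.lTensor H (v t) (TensorProduct.map (P t) (P t) y)
      = TensorProduct.map (P t) (PN t) y := by
    intro y
    rw [← LinearMap.comp_apply, LinearMap.lTensor, ← TensorProduct.map_comp,
      LinearMap.id_comp, hv t, LinearMap.comp_assoc, hPid, LinearMap.comp_id]
  have hkey : ∀ y, What (Ωinv (TensorProduct.map (PN t) (PN t) y))
      = TensorProduct.map (P t) (PN t) (What (Ωinv y)) := by
    intro y
    have h := DFunLike.congr_fun (hGP t) y
    rw [hGtilde] at h
    simpa using h
  have h1 : ∀ y, What (TensorProduct.map (P t) (P t) y)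
      = TensorProduct.map (P t) (P t) (What y) := by
    intro y
    simpa using DFunLike.congr_fun (hWP t) y
  have hw2 : ∀ y, Whatinv (What y) = y := by
    intro y
    simpa using DFunLike.congr_fun hW2 y
  apply LinearMap.ext; intro x
  simp only [LinearMap.comp_apply]
  rw [h1, hlT, ← hkey, hw2, ← hvv]
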